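/- For the quiver that is a disjoint union of two quivers Q1 and Q2 (no arrows between them), a maximal green sequence exists if and only if both Q1 and Q2 have maximal green sequences; moreover concatenating a maximal green sequence of Q1 with one of Q2 gives a maximal green sequence of the disjoint union. -/

import Mathlib

/-!  Quivers are encoded as skew-symmetric integer matrices `B : Matrix V V ℤ`,
where `B i j` is the number of arrows `i → j` minus the number of arrows `j → i`.
Framed quivers are encoded as extended matrices `Matrix (V ⊕ V) V ℤ`:
rows `Sum.inl a` are the mutable vertices, rows `Sum.inr a` are the frozen
vertices `a'`; the entry at `(Sum.inr a, j)` is the signed number of arrows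
between the frozen vertex `a'` and the mutable vertex `j` (positive meaning
`a' → j`).  Mutation is Fomin–Zelevinsky matrix mutation. -/

/-- Fomin–Zelevinsky matrix mutation of a square (skew-symmetric) matrix
at a vertex `k`. -/
def mutate {V : Type} [DecidableEq V] (B : Matrix V V ℤ) (k : V) : Matrix V V ℤ :=
  Matrix.of fun i j =>
    if i = k ∨ j = k then -B i j
    else B i j + (|B i k| * B k j + B i k * |B k j|) / 2

/-- Fomin–Zelevinsky matrix mutation of an extended (framed) matrix at a
mutable vertex `k`. -/
def emut {V : Type} [DecidableEq V] (B : Matrix (V ⊕ V) V ℤ) (k : V) :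
    Matrix (V ⊕ V) V ℤ :=
  Matrix.of fun i j =>
    if i = Sum.inl k ∨ j = k then -B i j
    else B i j + (|B i k| * B (Sum.inl k) j + B i k * |B (Sum.inl k) j|) / 2

/-- The framed quiver `Q̂` of `Q`: to each mutable vertex `j` we attach a frozen
vertex `j'` and an arrow `j → j'`; with our sign convention (entry
`(Sum.inr a, j)` positive means `a' → j`) the frozen block is minus the
identity matrix. -/
def framed {V : Type} [DecidableEq V] (B : Matrix V V ℤ) :
    Matrix (V ⊕ V) V ℤ :=
  Matrix.of fun i j =>
    match i with
    | Sum.inl a => B a j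
    | Sum.inr a => if a = j then (-1 : ℤ) else 0

/-- A mutable vertex `i` is green if no frozen vertex has an arrow into `i`. -/
def IsGreen {V : Type} (B : Matrix (V ⊕ V) V ℤ) (i : V) : Prop :=
  ∀ j, B (Sum.inr j) i ≤ 0

/-- A mutable vertex `i` is red if it has no arrow into any frozen vertex. -/
def IsRed {V : Type} (B : Matrix (V ⊕ V) V ℤ) (i : V) : Prop :=
  ∀ j, 0 ≤ B (Sum.inr j) i

/-- A green sequence: each mutation is performed at a vertex which is green
at that stage. -/
def IsGreenSeq {V : Type} [DecidableEq V] :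
    Matrix (V ⊕ V) V ℤ → List V → Prop
  | _, [] => True
  | B, k :: l => IsGreen B k ∧ IsGreenSeq (emut B k) l

/-- A maximal green sequence for `Q`: a green sequence for the framed quiver
`Q̂` after which every mutable vertex is red. -/
def IsMaximalGreenSeq {V : Type} [DecidableEq V] (B : Matrix V V ℤ)
    (l : List V) : Prop :=
  IsGreenSeq (framed B) l ∧ ∀ i, IsRed (l.foldl emut (framed B)) i

/-- Mutation equivalence: `C` is obtained from `B` by a finite sequence of
mutations. -/
def MutEquiv {V : Type} [DecidableEq V] (B C : Matrix V V ℤ) : Prop :=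
  ∃ l : List V, C = l.foldl mutate B

/-- The oriented `n`-cycle quiver: arrows `i → i - 1` (cyclically). -/
def cyc (n : ℕ) : Matrix (Fin n) (Fin n) ℤ :=
  Matrix.of fun a b =>
    (if ((a : ℕ) : ZMod n) = ((b : ℕ) : ZMod n) + 1 then (1 : ℤ) else 0) -
    (if ((b : ℕ) : ZMod n) = ((a : ℕ) : ZMod n) + 1 then (1 : ℤ) else 0)

section Aux

variable {V₁ V₂ : Type} [DecidableEq V₁] [DecidableEq V₂]

/-- Combine two extended matrices into an extended matrix on the disjoint
union, with no arrows between the parts. -/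
def prodE (E₁ : Matrix (V₁ ⊕ V₁) V₁ ℤ) (E₂ : Matrix (V₂ ⊕ V₂) V₂ ℤ) :
    Matrix ((V₁ ⊕ V₂) ⊕ (V₁ ⊕ V₂)) (V₁ ⊕ V₂) ℤ :=
  Matrix.of fun i j =>
    match i, j with
    | Sum.inl (Sum.inl a), Sum.inl j => E₁ (Sum.inl a) j
    | Sum.inr (Sum.inl a), Sum.inl j => E₁ (Sum.inr a) j
    | Sum.inl (Sum.inr a), Sum.inr j => E₂ (Sum.inl a) j
    | Sum.inr (Sum.inr a), Sum.inr j => E₂ (Sum.inr a) j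
    | _, _ => 0

lemma framed_fromBlocks (B₁ : Matrix V₁ V₁ ℤ) (B₂ : Matrix V₂ V₂ ℤ) :
    framed (Matrix.fromBlocks B₁ 0 0 B₂) = prodE (framed B₁) (framed B₂) := by
  ext i j
  rcases i with (a | a) | (a | a) <;> rcases j with j | j <;>
    simp [framed, prodE, Matrix.fromBlocks]

lemma emut_prodE_left (E₁ : Matrix (V₁ ⊕ V₁) V₁ ℤ) (E₂ : Matrix (V₂ ⊕ V₂) V₂ ℤ)
    (k : V₁) : emut (prodE E₁ E₂) (Sum.inl k) = prodE (emut E₁ k) E₂ := by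
  ext i j
  rcases i with (a | a) | (a | a) <;> rcases j with j | j <;>
    simp [emut, prodE] <;> split_ifs <;> simp_all

lemma emut_prodE_right (E₁ : Matrix (V₁ ⊕ V₁) V₁ ℤ) (E₂ : Matrix (V₂ ⊕ V₂) V₂ ℤ)
    (k : V₂) : emut (prodE E₁ E₂) (Sum.inr k) = prodE E₁ (emut E₂ k) := by
  ext i j
  rcases i with (a | a) | (a | a) <;> rcases j with j | j <;>
    simp [emut, prodE] <;> split_ifs <;> simp_all

lemma isGreen_prodE_left {E₁ : Matrix (V₁ ⊕ V₁) V₁ ℤ}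
    {E₂ : Matrix (V₂ ⊕ V₂) V₂ ℤ} (i : V₁) :
    IsGreen (prodE E₁ E₂) (Sum.inl i) ↔ IsGreen E₁ i := by
  constructor
  · exact fun h j => h (Sum.inl j)
  · intro h j
    rcases j with j | j
    · exact h j
    · simp [prodE]

lemma isGreen_prodE_right {E₁ : Matrix (V₁ ⊕ V₁) V₁ ℤ}
    {E₂ : Matrix (V₂ ⊕ V₂) V₂ ℤ} (i : V₂) :
    IsGreen (prodE E₁ E₂) (Sum.inr i) ↔ IsGreen E₂ i := by
  constructor
  · exact fun h j => h (Sum.inr j)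
  · intro h j
    rcases j with j | j
    · simp [prodE]
    · exact h j

lemma isRed_prodE_left {E₁ : Matrix (V₁ ⊕ V₁) V₁ ℤ}
    {E₂ : Matrix (V₂ ⊕ V₂) V₂ ℤ} (i : V₁) :
    IsRed (prodE E₁ E₂) (Sum.inl i) ↔ IsRed E₁ i := by
  constructor
  · exact fun h j => h (Sum.inl j)
  · intro h j
    rcases j with j | j
    · exact h j
    · simp [prodE]

lemma isRed_prodE_right {E₁ : Matrix (V₁ ⊕ V₁) V₁ ℤ}
    {E₂ : Matrix (V₂ ⊕ V₂) V₂ ℤ} (i : V₂) :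
    IsRed (prodE E₁ E₂) (Sum.inr i) ↔ IsRed E₂ i := by
  constructor
  · exact fun h j => h (Sum.inr j)
  · intro h j
    rcases j with j | j
    · simp [prodE]
    · exact h j

lemma foldl_emut_prodE (l : List (V₁ ⊕ V₂)) :
    ∀ (E₁ : Matrix (V₁ ⊕ V₁) V₁ ℤ) (E₂ : Matrix (V₂ ⊕ V₂) V₂ ℤ),
    l.foldl emut (prodE E₁ E₂) =
      prodE ((l.filterMap Sum.getLeft?).foldl emut E₁)
            ((l.filterMap Sum.getRight?).foldl emut E₂) := by
  induction l with
  | nil => intro E₁ E₂; rfl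
  | cons k l ih =>
    intro E₁ E₂
    rcases k with k | k
    · simpa [emut_prodE_left, List.filterMap_cons] using ih (emut E₁ k) E₂
    · simpa [emut_prodE_right, List.filterMap_cons] using ih E₁ (emut E₂ k)

lemma isGreenSeq_prodE_split (l : List (V₁ ⊕ V₂)) :
    ∀ (E₁ : Matrix (V₁ ⊕ V₁) V₁ ℤ) (E₂ : Matrix (V₂ ⊕ V₂) V₂ ℤ),
    IsGreenSeq (prodE E₁ E₂) l →
      IsGreenSeq E₁ (l.filterMap Sum.getLeft?) ∧
      IsGreenSeq E₂ (l.filterMap Sum.getRight?) := by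
  induction l with
  | nil => intro E₁ E₂ _; exact ⟨trivial, trivial⟩
  | cons k l ih =>
    intro E₁ E₂ h
    rcases k with k | k
    · rw [IsGreenSeq, emut_prodE_left] at h
      have := ih _ _ h.2
      exact ⟨⟨(isGreen_prodE_left k).1 h.1, by simpa using this.1⟩,
        by simpa [List.filterMap_cons] using this.2⟩
    · rw [IsGreenSeq, emut_prodE_right] at h
      have := ih _ _ h.2
      exact ⟨by simpa [List.filterMap_cons] using this.1,
        ⟨(isGreen_prodE_right k).1 h.1, by simpa using this.2⟩⟩

lemma isGreenSeq_prodE_map_inl (l : List V₁) :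
    ∀ (E₁ : Matrix (V₁ ⊕ V₁) V₁ ℤ) (E₂ : Matrix (V₂ ⊕ V₂) V₂ ℤ),
    IsGreenSeq E₁ l → IsGreenSeq (prodE E₁ E₂) (l.map Sum.inl) := by
  induction l with
  | nil => intro _ _ _; trivial
  | cons k l ih =>
    intro E₁ E₂ h
    refine ⟨(isGreen_prodE_left k).2 h.1, ?_⟩
    rw [emut_prodE_left]
    exact ih _ _ h.2

lemma isGreenSeq_prodE_map_inr (l : List V₂) :
    ∀ (E₁ : Matrix (V₁ ⊕ V₁) V₁ ℤ) (E₂ : Matrix (V₂ ⊕ V₂) V₂ ℤ),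
    IsGreenSeq E₂ l → IsGreenSeq (prodE E₁ E₂) (l.map Sum.inr) := by
  induction l with
  | nil => intro _ _ _; trivial
  | cons k l ih =>
    intro E₁ E₂ h
    refine ⟨(isGreen_prodE_right k).2 h.1, ?_⟩
    rw [emut_prodE_right]
    exact ih _ _ h.2

lemma isGreenSeq_append {V : Type} [DecidableEq V] (l l' : List V) :
    ∀ (B : Matrix (V ⊕ V) V ℤ),
    IsGreenSeq B (l ++ l') ↔ IsGreenSeq B l ∧ IsGreenSeq (l.foldl emut B) l' := by
  induction l with
  | nil => intro B; simp [IsGreenSeq]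
  | cons k l ih =>
    intro B
    show (IsGreen B k ∧ IsGreenSeq (emut B k) (l ++ l')) ↔
      (IsGreen B k ∧ IsGreenSeq (emut B k) l) ∧
        IsGreenSeq (List.foldl emut (emut B k) l) l'
    rw [ih]
    exact and_assoc.symm

end Aux

/-- a disjoint union of two quivers has a maximal green
sequence if and only if both parts do; moreover concatenating maximal green
sequences of the parts gives one for the disjoint union. -/
theorem disjoint_union_mgs {V₁ V₂ : Type} [Fintype V₁] [DecidableEq V₁]
    [Fintype V₂] [DecidableEq V₂]
    (B₁ : Matrix V₁ V₁ ℤ) (B₂ : Matrix V₂ V₂ ℤ)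
    (h₁ : B₁.transpose = -B₁) (h₂ : B₂.transpose = -B₂) :
    ((∃ l, IsMaximalGreenSeq (Matrix.fromBlocks B₁ 0 0 B₂) l) ↔
      (∃ l₁, IsMaximalGreenSeq B₁ l₁) ∧ (∃ l₂, IsMaximalGreenSeq B₂ l₂)) ∧
    (∀ (l₁ : List V₁) (l₂ : List V₂), IsMaximalGreenSeq B₁ l₁ →
      IsMaximalGreenSeq B₂ l₂ →
      IsMaximalGreenSeq (Matrix.fromBlocks B₁ 0 0 B₂)
        (l₁.map Sum.inl ++ l₂.map Sum.inr)) := by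
  have hfl : ∀ (l : List V₁),
      (l.map (Sum.inl : V₁ → V₁ ⊕ V₂)).filterMap Sum.getLeft? = l := by
    intro l; induction l with
    | nil => rfl
    | cons a l ih => simp [ih]
  have hfl' : ∀ (l : List V₁),
      (l.map (Sum.inl : V₁ → V₁ ⊕ V₂)).filterMap Sum.getRight? = [] := by
    intro l; induction l with
    | nil => rfl
    | cons a l ih => simp [ih]
  have hfr : ∀ (l : List V₂),
      (l.map (Sum.inr : V₂ → V₁ ⊕ V₂)).filterMap Sum.getRight? = l := by
    intro l; induction l with
    | nil => rfl
    | cons a l ih => simp [ih]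
  have hfr' : ∀ (l : List V₂),
      (l.map (Sum.inr : V₂ → V₁ ⊕ V₂)).filterMap Sum.getLeft? = [] := by
    intro l; induction l with
    | nil => rfl
    | cons a l ih => simp [ih]
  have main : ∀ (l₁ : List V₁) (l₂ : List V₂), IsMaximalGreenSeq B₁ l₁ →
      IsMaximalGreenSeq B₂ l₂ →
      IsMaximalGreenSeq (Matrix.fromBlocks B₁ 0 0 B₂)
        (l₁.map Sum.inl ++ l₂.map Sum.inr) := by
    rintro l₁ l₂ ⟨g1, r1⟩ ⟨g2, r2⟩
    constructor
    · rw [framed_fromBlocks, isGreenSeq_append]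
      refine ⟨isGreenSeq_prodE_map_inl l₁ _ _ g1, ?_⟩
      rw [foldl_emut_prodE, hfl, hfl']
      exact isGreenSeq_prodE_map_inr l₂ _ _ g2
    · intro i
      rw [framed_fromBlocks, foldl_emut_prodE]
      simp only [List.filterMap_append, hfl, hfl', hfr, hfr', List.append_nil,
        List.nil_append]
      rcases i with i | i
      · exact (isRed_prodE_left i).2 (r1 i)
      · exact (isRed_prodE_right i).2 (r2 i)
  refine ⟨⟨?_, ?_⟩, main⟩
  · rintro ⟨l, hg, hr⟩
    rw [framed_fromBlocks] at hg hr
    obtain ⟨g1, g2⟩ := isGreenSeq_prodE_split l _ _ hg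
    rw [foldl_emut_prodE] at hr
    exact ⟨⟨_, g1, fun i => (isRed_prodE_left i).1 (hr (Sum.inl i))⟩,
      ⟨_, g2, fun i => (isRed_prodE_right i).1 (hr (Sum.inr i))⟩⟩
  · rintro ⟨⟨l₁, h1⟩, ⟨l₂, h2⟩⟩
    exact ⟨_, main l₁ l₂ h1 h2⟩
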